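/- Let ℱ be a family of pairwise disjoint subsets of ℝⁿ (a 'foliation' in the set-theoretic sense of a partition) that is invariant under ℤⁿ-translations, and suppose each member of ℱ is contained in the 2T-neighborhood of a translate of a fixed linear hyperplane P and contains a point within distance 2T of every point of that translate. If x, y lie in the same member F of the partition and the partition is uniformly properly embedded with proper gauge φ (i.e., u, v in the same member with ‖u − v‖ ≤ A implies d_F(u,v) ≤ φ(A) for a monotone φ), then d_F(x, y) ≤ φ(4T + 1)·(‖x − y‖ + 1). -/

import Mathlib

/-- The orthogonal projection minimizes distance: pointwise form. -/
lemma proj_min {E : Type*} [NormedAddCommGroup E] [InnerProductSpace ℝ E]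
    (U : Submodule ℝ E) [U.HasOrthogonalProjection] (y : E) {v : E} (hv : v ∈ U) :
    ‖y - U.orthogonalProjectionOnto y‖ ≤ ‖y - v‖ := by
  rw [← Submodule.starProjection_apply, Submodule.starProjection_minimal]
  exact ciInf_le ⟨0, fun r ⟨x, hx⟩ => hx ▸ norm_nonneg _⟩ (⟨v, hv⟩ : U)

/-- A ℤⁿ-invariant partition of ℝⁿ whose members stay 2T-close to translates of a fixed linear
hyperplane and are uniformly properly embedded with gauge φ is quasi-isometric:
d_F(x,y) ≤ φ(4T+1)·(‖x−y‖+1). -/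
theorem stmt14 (n : ℕ) (ℱ : Set (Set (EuclideanSpace ℝ (Fin n))))
    (P : Submodule ℝ (EuclideanSpace ℝ (Fin n))) (T : ℝ) (hT : 0 ≤ T)
    (φ : ℝ → ℝ) (hφ : Monotone φ)
    (d : EuclideanSpace ℝ (Fin n) → EuclideanSpace ℝ (Fin n) → ℝ)
    (hdisj : ℱ.Pairwise Disjoint)
    (hZinv : ∀ F ∈ ℱ, ∀ m : Fin n → ℤ,
      (fun x => x + (WithLp.toLp 2 (fun i => (m i : ℝ)) : EuclideanSpace ℝ (Fin n))) '' F ∈ ℱ)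
    (hnear : ∀ F ∈ ℱ, ∃ v₀ : EuclideanSpace ℝ (Fin n),
      (∀ x ∈ F, ∃ p ∈ P, ‖x - (p + v₀)‖ ≤ 2 * T) ∧
      (∀ p ∈ P, ∃ x ∈ F, ‖x - (p + v₀)‖ ≤ 2 * T))
    (htri : ∀ u v w, d u v ≤ d u w + d w v)
    (hgauge : ∀ F ∈ ℱ, ∀ A : ℝ, ∀ u ∈ F, ∀ v ∈ F, ‖u - v‖ ≤ A → d u v ≤ φ A) :
    ∀ F ∈ ℱ, ∀ x ∈ F, ∀ y ∈ F, d x y ≤ φ (4 * T + 1) * (‖x - y‖ + 1) := by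
  intro F hF x hx y hy
  classical
  obtain ⟨v₀, h1, h2⟩ := hnear F hF
  obtain ⟨px, hpx, hex⟩ := h1 x hx
  obtain ⟨py, hpy, hey⟩ := h1 y hy
  set a : ℝ := ‖x - y‖ with ha
  have ha0 : 0 ≤ a := norm_nonneg _
  set N : ℕ := max ⌈a⌉₊ 1 with hN
  have hN1 : 1 ≤ N := le_max_right _ _
  have hNpos : (0:ℝ) < (N:ℝ) := by exact_mod_cast Nat.lt_of_lt_of_le Nat.zero_lt_one hN1
  have hNa : a ≤ (N:ℝ) := le_trans (Nat.le_ceil a) (by exact_mod_cast le_max_left _ _)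
  have hNle : (N:ℝ) ≤ a + 1 := by
    have h1' : (⌈a⌉₊ : ℝ) ≤ a + 1 := le_of_lt (Nat.ceil_lt_add_one ha0)
    have h2' : ((1:ℕ) : ℝ) ≤ a + 1 := by push_cast; linarith
    rcases max_cases ⌈a⌉₊ 1 with ⟨h, _⟩ | ⟨h, _⟩ <;> rw [hN, h] <;> assumption
  -- subdivision points
  set z : ℕ → EuclideanSpace ℝ (Fin n) := fun i => x + ((i:ℝ)/(N:ℝ)) • (y - x) with hz
  -- projected points on the affine translate
  set c : ℕ → EuclideanSpace ℝ (Fin n) :=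
    fun i => (P.orthogonalProjectionOnto (z i - v₀) : EuclideanSpace ℝ (Fin n)) + v₀ with hc
  have hz0 : z 0 = x := by simp [hz]
  have hzN : z N = y := by
    simp only [hz]
    rw [div_self (ne_of_gt hNpos), one_smul]
    abel
  -- distance from z i to the translate
  have hzc : ∀ i : ℕ, i ≤ N → ‖z i - c i‖ ≤ 2 * T := by
    intro i hi
    set t : ℝ := (i:ℝ)/(N:ℝ) with ht
    have ht0 : 0 ≤ t := div_nonneg (Nat.cast_nonneg _) (le_of_lt hNpos)
    have ht1 : t ≤ 1 := by
      rw [ht, div_le_one hNpos]; exact_mod_cast hi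
    have key : z i - v₀ - ((1-t) • px + t • py) = (1-t) • (x - (px + v₀)) + t • (y - (py + v₀)) := by
      simp only [hz]
      rw [smul_sub, smul_sub, smul_sub]
      module
    have hmem : (1-t) • px + t • py ∈ P := P.add_mem (P.smul_mem _ hpx) (P.smul_mem _ hpy)
    have hle : ‖z i - v₀ - ((1-t) • px + t • py)‖ ≤ 2 * T := by
      rw [key]
      calc ‖(1-t) • (x - (px + v₀)) + t • (y - (py + v₀))‖
          ≤ ‖(1-t) • (x - (px + v₀))‖ + ‖t • (y - (py + v₀))‖ := norm_add_le _ _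
        _ = |1-t| * ‖x - (px + v₀)‖ + |t| * ‖y - (py + v₀)‖ := by
            rw [norm_smul, norm_smul, Real.norm_eq_abs, Real.norm_eq_abs]
        _ ≤ (1-t) * (2*T) + t * (2*T) := by
            rw [abs_of_nonneg (by linarith), abs_of_nonneg ht0]
            gcongr <;> linarith
        _ = 2 * T := by ring
    have := proj_min P (z i - v₀) hmem
    calc ‖z i - c i‖ = ‖(z i - v₀) - P.orthogonalProjectionOnto (z i - v₀)‖ := by
          simp only [hc]; congr 1; abel
      _ ≤ ‖z i - v₀ - ((1-t) • px + t • py)‖ := this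
      _ ≤ 2 * T := hle
  -- consecutive projected points are within distance 1
  have hcc : ∀ i : ℕ, ‖c i - c (i+1)‖ ≤ 1 := by
    intro i
    have hzz : ‖z i - z (i+1)‖ ≤ 1 := by
      have : z i - z (i+1) = (((i:ℝ) - ((i:ℝ)+1))/(N:ℝ)) • (y - x) := by
        simp only [hz, Nat.cast_add, Nat.cast_one]
        rw [sub_div, sub_smul]
        abel
      rw [this, norm_smul, Real.norm_eq_abs]
      have : |((i:ℝ) - ((i:ℝ)+1))/(N:ℝ)| = 1/(N:ℝ) := by
        rw [abs_div, abs_of_pos hNpos]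
        norm_num
      rw [this, norm_sub_rev]
      rw [div_mul_eq_mul_div, one_mul, div_le_one hNpos]
      exact hNa
    have hproj : c i - c (i+1)
        = (P.orthogonalProjectionOnto ((z i - v₀) - (z (i+1) - v₀)) : EuclideanSpace ℝ (Fin n)) := by
      simp only [hc, map_sub]
      push_cast
      abel
    rw [hproj]
    calc ‖(P.orthogonalProjectionOnto ((z i - v₀) - (z (i+1) - v₀)) : EuclideanSpace ℝ (Fin n))‖
        = ‖P.orthogonalProjectionOnto ((z i - v₀) - (z (i+1) - v₀))‖ := rfl
      _ ≤ ‖P.orthogonalProjectionOnto‖ * ‖(z i - v₀) - (z (i+1) - v₀)‖ :=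
          P.orthogonalProjectionOnto.le_opNorm _
      _ ≤ 1 * 1 := by
          have h' : (z i - v₀) - (z (i+1) - v₀) = z i - z (i+1) := by abel
          rw [h']
          exact mul_le_mul (Submodule.orthogonalProjectionOnto_norm_le P) hzz (norm_nonneg _) zero_le_one
      _ = 1 := one_mul 1
  -- chain points in F
  set w : ℕ → EuclideanSpace ℝ (Fin n) := fun i =>
    if i = 0 then x else if i = N then y
    else Classical.choose (h2 (P.orthogonalProjectionOnto (z i - v₀)) (Submodule.coe_mem _)) with hw
  have hwF : ∀ i, w i ∈ F := by
    intro i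
    simp only [hw]
    split
    · exact hx
    · split
      · exact hy
      · exact (Classical.choose_spec
          (h2 (P.orthogonalProjectionOnto (z i - v₀)) (Submodule.coe_mem _))).1
  have hwc : ∀ i, i ≤ N → ‖w i - c i‖ ≤ 2 * T := by
    intro i hi
    simp only [hw]
    split
    · next h0 => subst h0; rw [← hz0]; exact hzc 0 (Nat.zero_le _)
    · split
      · next _ hN' => subst hN'; rw [← hzN]; exact hzc _ hi
      · have := (Classical.choose_spec
          (h2 (P.orthogonalProjectionOnto (z i - v₀)) (Submodule.coe_mem _))).2
        simpa only [hc] using this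
  -- each step has d-length ≤ φ(4T+1)
  have hstep : ∀ i : ℕ, i + 1 ≤ N → d (w i) (w (i+1)) ≤ φ (4*T+1) := by
    intro i hi
    apply hgauge F hF (4*T+1) _ (hwF i) _ (hwF (i+1))
    calc ‖w i - w (i+1)‖
        ≤ ‖w i - c i‖ + ‖c i - c (i+1)‖ + ‖c (i+1) - w (i+1)‖ := by
          have := norm_add₃_le (a := w i - c i) (b := c i - c (i+1)) (c := c (i+1) - w (i+1))
          simpa using this
      _ ≤ 2*T + 1 + 2*T := by
          gcongr
          · exact hwc i (le_trans (Nat.le_succ i) hi)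
          · exact hcc i
          · rw [norm_sub_rev]; exact hwc (i+1) hi
      _ = 4*T + 1 := by ring
  -- φ(4T+1) is nonnegative
  have hφ0 : 0 ≤ φ (4*T+1) := by
    have h00 : 0 ≤ d x x := by have := htri x x x; linarith
    have : d x x ≤ φ 0 := hgauge F hF 0 x hx x hx (by simp)
    have : φ 0 ≤ φ (4*T+1) := hφ (by linarith)
    linarith
  -- chain the steps
  have hchain : ∀ k : ℕ, 1 ≤ k → k ≤ N → d x (w k) ≤ (k:ℝ) * φ (4*T+1) := by
    intro k
    induction k with
    | zero => intro h; omega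
    | succ m ih =>
      intro _ hm
      rcases Nat.eq_zero_or_pos m with h0 | h1
      · subst h0
        have : w 0 = x := by simp [hw]
        rw [← this]
        simpa using hstep 0 hm
      · calc d x (w (m+1)) ≤ d x (w m) + d (w m) (w (m+1)) := htri _ _ _
          _ ≤ (m:ℝ) * φ (4*T+1) + φ (4*T+1) := by
              gcongr
              · exact ih h1 (le_trans (Nat.le_succ m) hm)
              · exact hstep m hm
          _ = ((m+1:ℕ):ℝ) * φ (4*T+1) := by push_cast; ring
  have hwN : w N = y := by
    simp only [hw]
    rw [if_neg (by omega : ¬ N = 0)]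
    simp
  calc d x y = d x (w N) := by rw [hwN]
    _ ≤ (N:ℝ) * φ (4*T+1) := hchain N hN1 le_rfl
    _ ≤ (a + 1) * φ (4*T+1) := by gcongr
    _ = φ (4*T+1) * (‖x - y‖ + 1) := by rw [ha]; ring
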